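/- Let R be a reduced commutative ring and f ∈ R[X] a nonzero very strongly irreducible element. Then f is a regular element of R[X] (not a zero divisor). -/

import Mathlib

theorem very_strongly_irreducible_regular_of_reduced {R : Type*} [CommRing R] [IsReduced R]
    (f : Polynomial R) (hf0 : f ≠ 0) (hfu : ¬IsUnit f)
    (hvsi : ∀ g h : Polynomial R, f = g * h → IsUnit g ∨ IsUnit h) :
    ∀ g : Polynomial R, g * f = 0 → g = 0 := by
  by_contra hc
  push_neg at hc
  obtain ⟨g, hgf, hg0⟩ := hc
  have hP : f ∉ nonZeroDivisors (Polynomial R) := by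
    intro h
    exact hg0 (mem_nonZeroDivisors_iff_right.1 h g hgf)
  obtain ⟨a, ha0, haf⟩ := Polynomial.notMem_nonZeroDivisors_iff.1 hP
  have hCaf : Polynomial.C a * f = 0 := by
    rwa [Polynomial.smul_eq_C_mul] at haf
  have hfeq : f = f * (1 + Polynomial.C a * Polynomial.X) := by
    rw [mul_add, mul_one, mul_comm f, mul_assoc, mul_comm (Polynomial.X) f,
      ← mul_assoc, hCaf, zero_mul, add_zero]
  rcases hvsi _ _ hfeq with h | h
  · exact hfu h
  · have hn := (Polynomial.isUnit_iff_coeff_isUnit_isNilpotent.1 h).2 1 one_ne_zero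
    have hc1 : (1 + Polynomial.C a * Polynomial.X).coeff 1 = a := by simp [Polynomial.coeff_one]
    rw [hc1] at hn
    exact ha0 hn.eq_zero
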